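/- arXiv:1808.08764 — 3 statements merged into one kernel-verified Lean document; each statement's English description precedes it below -/
import Mathlib

section
/- The logarithmic map on the manifold of Hermitian positive definite matrices is equivariant under congruence: for any invertible matrix a and Hermitian positive definite p, q, one has a* Log_p(q) a = Log_{a* p a}(a* q a). -/
open Matrix
open scoped ComplexOrder Classical

/-- Matrix logarithm of a Hermitian (in particular HPD) matrix, via the spectral theorem. -/
noncomputable def mLog {d : ℕ} (A : Matrix (Fin d) (Fin d) ℂ) : Matrix (Fin d) (Fin d) ℂ :=
  if hA : A.IsHermitian then
    (hA.eigenvectorUnitary : Matrix (Fin d) (Fin d) ℂ) *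
      Matrix.diagonal (fun i => (Real.log (hA.eigenvalues i) : ℂ)) *
      (star hA.eigenvectorUnitary : Matrix (Fin d) (Fin d) ℂ)
  else 0

/-- Matrix exponential. -/
noncomputable def mExp {d : ℕ} (A : Matrix (Fin d) (Fin d) ℂ) : Matrix (Fin d) (Fin d) ℂ :=
  NormedSpace.exp A

/-- Hermitian positive (semi)definite square root. -/
noncomputable def msqrt {d : ℕ} (A : Matrix (Fin d) (Fin d) ℂ) : Matrix (Fin d) (Fin d) ℂ :=
  if hA : A.PosSemidef then
    (hA.1.eigenvectorUnitary : Matrix (Fin d) (Fin d) ℂ) *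
      Matrix.diagonal ((↑) ∘ Real.sqrt ∘ hA.1.eigenvalues) *
      (star hA.1.eigenvectorUnitary : Matrix (Fin d) (Fin d) ℂ)
  else 1

/-- Frobenius norm. -/
noncomputable def frobNorm {d : ℕ} (A : Matrix (Fin d) (Fin d) ℂ) : ℝ :=
  Real.sqrt ((Aᴴ * A).trace.re)

/-- Affine-invariant Riemannian distance. -/
noncomputable def deltaR {d : ℕ} (p₁ p₂ : Matrix (Fin d) (Fin d) ℂ) : ℝ :=
  frobNorm (mLog ((msqrt p₁)⁻¹ * p₂ * (msqrt p₁)⁻¹))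

/-- Real matrix power of an HPD matrix: `x^t = Exp (t • Log x)`. -/
noncomputable def mPow {d : ℕ} (A : Matrix (Fin d) (Fin d) ℂ) (t : ℝ) : Matrix (Fin d) (Fin d) ℂ :=
  mExp ((t : ℂ) • mLog A)

/-- Riemannian logarithmic map at `p`. -/
noncomputable def logMap {d : ℕ} (p q : Matrix (Fin d) (Fin d) ℂ) : Matrix (Fin d) (Fin d) ℂ :=
  msqrt p * mLog ((msqrt p)⁻¹ * q * (msqrt p)⁻¹) * msqrt p

/-- Riemannian exponential map at `p`. -/
noncomputable def expMap {d : ℕ} (p h : Matrix (Fin d) (Fin d) ℂ) : Matrix (Fin d) (Fin d) ℂ :=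
  msqrt p * mExp ((msqrt p)⁻¹ * h * (msqrt p)⁻¹) * msqrt p

/-- Affine-invariant geodesic from `p₁` to `p₂`. -/
noncomputable def geo {d : ℕ} (p₁ p₂ : Matrix (Fin d) (Fin d) ℂ) (t : ℝ) :
    Matrix (Fin d) (Fin d) ℂ :=
  msqrt p₁ * mPow ((msqrt p₁)⁻¹ * p₂ * (msqrt p₁)⁻¹) t * msqrt p₁

lemma mLog_eq_cfc {d : ℕ} {A : Matrix (Fin d) (Fin d) ℂ} (hA : A.IsHermitian) :
    mLog A = cfc Real.log A := by
  rw [mLog, dif_pos hA, Matrix.IsHermitian.cfc_eq hA Real.log, Matrix.IsHermitian.cfc]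
  rfl

/-- Conjugation by a unitary matrix as a star algebra homomorphism. -/
noncomputable def conjSAH {d : ℕ} (u : Matrix (Fin d) (Fin d) ℂ)
    (hu : u ∈ Matrix.unitaryGroup (Fin d) ℂ) :
    Matrix (Fin d) (Fin d) ℂ →⋆ₐ[ℂ] Matrix (Fin d) (Fin d) ℂ where
  toFun x := u * x * star u
  map_one' := by
    show u * 1 * star u = 1
    rw [mul_one, Unitary.mul_star_self_of_mem hu]
  map_mul' x y := by
    show u * (x * y) * star u = (u * x * star u) * (u * y * star u)
    have h : star u * u = 1 := Unitary.star_mul_self_of_mem hu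
    simp only [mul_assoc]
    rw [← mul_assoc (star u) u, h, one_mul]
  map_zero' := by simp
  map_add' x y := by
    show u * (x + y) * star u = u * x * star u + u * y * star u
    rw [mul_add, add_mul]
  commutes' r := by
    show u * algebraMap ℂ _ r * star u = algebraMap ℂ _ r
    simp only [Algebra.algebraMap_eq_smul_one, mul_smul_comm, smul_mul_assoc, mul_one]
    rw [Unitary.mul_star_self_of_mem hu]
  map_star' x := by
    show u * star x * star u = star (u * x * star u)
    simp only [StarMul.star_mul, star_star, mul_assoc]

lemma mLog_unitary_conj {d : ℕ} {u A : Matrix (Fin d) (Fin d) ℂ}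
    (hu : u ∈ Matrix.unitaryGroup (Fin d) ℂ) (hA : A.IsHermitian) :
    mLog (u * A * star u) = u * mLog A * star u := by
  have hA' : IsSelfAdjoint A := hA
  have h2 : (u * A * star u).IsHermitian := by
    have : star (u * A * star u) = u * A * star u := by
      simp only [StarMul.star_mul, star_star, mul_assoc, hA.eq]
      rw [hA']
    exact this
  have h2' : IsSelfAdjoint (u * A * star u) := h2
  have hcont : Continuous (conjSAH u hu) := by
    show Continuous fun x => u * x * star u
    exact (continuous_const.mul continuous_id).mul continuous_const
  have hf : ContinuousOn Real.log (spectrum ℝ A) := by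
    rw [continuousOn_iff_continuous_restrict]
    fun_prop
  have key := StarAlgHomClass.map_cfc (S := ℂ) (conjSAH u hu) Real.log A hf hcont hA' h2'
  rw [mLog_eq_cfc hA, mLog_eq_cfc h2]
  exact key.symm

lemma posDef_conj {d : ℕ} {p a : Matrix (Fin d) (Fin d) ℂ} (hp : p.PosDef)
    (ha : IsUnit a.det) : (aᴴ * p * a).PosDef := by
  refine hp.conjTranspose_mul_mul_same (fun x y h => ?_)
  have := congrArg (fun v => a⁻¹ *ᵥ v) h
  simpa [Matrix.mulVec_mulVec, Matrix.nonsing_inv_mul _ ha] using this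

lemma msqrt_facts {d : ℕ} {p : Matrix (Fin d) (Fin d) ℂ} (hp : p.PosDef) :
    (msqrt p).IsHermitian ∧ msqrt p * msqrt p = p ∧ IsUnit (msqrt p).det := by
  have hps : p.PosSemidef := hp.posSemidef
  have h1 : msqrt p = cfc Real.sqrt p := by
    rw [msqrt, dif_pos hps, Matrix.IsHermitian.cfc_eq hps.1 Real.sqrt, Matrix.IsHermitian.cfc]
    rfl
  have hsa : IsSelfAdjoint p := hps.1
  have hsq : msqrt p * msqrt p = p := by
    rw [h1, ← cfc_mul (fun x => Real.sqrt x) (fun x => Real.sqrt x) p]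
    conv_rhs => rw [← cfc_id' ℝ p]
    refine cfc_congr (fun x hx => ?_)
    obtain ⟨i, rfl⟩ := hps.1.spectrum_real_eq_range_eigenvalues ▸ hx
    exact Real.mul_self_sqrt (hps.eigenvalues_nonneg i)
  refine ⟨h1 ▸ (cfc_predicate Real.sqrt p : IsSelfAdjoint _), hsq, ?_⟩
  have hdet : (msqrt p).det * (msqrt p).det = p.det := by
    rw [← Matrix.det_mul, hsq]
  have : IsUnit ((msqrt p).det * (msqrt p).det) := hdet ▸ hp.det_pos.ne'.isUnit
  exact (IsUnit.mul_iff.mp this).1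

/-- Abstract algebraic core of the equivariance statement. -/
lemma core {d : ℕ} (p q a s r : Matrix (Fin d) (Fin d) ℂ)
    (hq : q.IsHermitian) (ha : IsUnit a.det)
    (hsH : s.IsHermitian) (hs2 : s * s = p) (hsU : IsUnit s.det)
    (hrH : r.IsHermitian) (hr2 : r * r = aᴴ * p * a) (hrU : IsUnit r.det) :
    aᴴ * (s * mLog (s⁻¹ * q * s⁻¹) * s) * a
      = r * mLog (r⁻¹ * (aᴴ * q * a) * r⁻¹) * r := by
  set u := r⁻¹ * (aᴴ * s) with hu_def
  have hsiH : (s⁻¹)ᴴ = s⁻¹ := by rw [Matrix.conjTranspose_nonsing_inv, hsH.eq]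
  have hstar_u : star u = s * a * r⁻¹ := by
    rw [hu_def]
    simp only [star_eq_conjTranspose, Matrix.conjTranspose_mul, Matrix.conjTranspose_nonsing_inv,
      Matrix.conjTranspose_conjTranspose, hsH.eq, hrH.eq, Matrix.mul_assoc]
  have hu : u ∈ Matrix.unitaryGroup (Fin d) ℂ := by
    rw [Matrix.mem_unitaryGroup_iff, hstar_u, hu_def]
    calc r⁻¹ * (aᴴ * s) * (s * a * r⁻¹)
        = r⁻¹ * (aᴴ * (s * s) * a) * r⁻¹ := by simp only [Matrix.mul_assoc]
      _ = r⁻¹ * (r * r) * r⁻¹ := by rw [hs2, hr2]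
      _ = 1 := by
          rw [← Matrix.mul_assoc r⁻¹ r r, Matrix.nonsing_inv_mul _ hrU, one_mul,
            Matrix.mul_nonsing_inv _ hrU]
  set m := s⁻¹ * q * s⁻¹ with hm_def
  have hmH : m.IsHermitian := by
    have h := Matrix.isHermitian_conjTranspose_mul_mul s⁻¹ hq
    rw [hsiH] at h
    exact hm_def ▸ h
  have hm' : r⁻¹ * (aᴴ * q * a) * r⁻¹ = u * m * star u := by
    rw [hstar_u, hu_def, hm_def]
    simp only [Matrix.mul_assoc]
    rw [← Matrix.mul_assoc s s⁻¹, Matrix.mul_nonsing_inv _ hsU, one_mul,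
      ← Matrix.mul_assoc s⁻¹ s, Matrix.nonsing_inv_mul _ hsU, one_mul]
  rw [hm', mLog_unitary_conj hu hmH, hstar_u, hu_def]
  simp only [Matrix.mul_assoc]
  rw [← Matrix.mul_assoc r r⁻¹, Matrix.mul_nonsing_inv _ hrU, one_mul,
    Matrix.nonsing_inv_mul _ hrU, mul_one]

theorem logMap_congruence_equivariant {d : ℕ} (p q a : Matrix (Fin d) (Fin d) ℂ)
    (hp : p.PosDef) (hq : q.PosDef) (ha : IsUnit a.det) :
    aᴴ * logMap p q * a = logMap (aᴴ * p * a) (aᴴ * q * a) := by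
  obtain ⟨hsH, hs2, hsU⟩ := msqrt_facts hp
  obtain ⟨hrH, hr2, hrU⟩ := msqrt_facts (posDef_conj hp ha)
  rw [logMap, logMap]
  exact core p q a (msqrt p) (msqrt (aᴴ * p * a)) hq.1 ha hsH hs2 hsU hrH hr2 hrU
end

section
/- For Hermitian positive definite matrices p₁, p₂, the affine-invariant Riemannian distance is symmetric: ‖Log(p₁^{-1/2} p₂ p₁^{-1/2})‖_F = ‖Log(p₂^{-1/2} p₁ p₂^{-1/2})‖_F. -/
open Matrix
open scoped ComplexOrder Classical

section DeltaRAux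

open Polynomial

variable {d : ℕ}

/-- Similar matrices have the same characteristic polynomial. -/
lemma charpoly_conj_aux (M A : Matrix (Fin d) (Fin d) ℂ) (hM : IsUnit M.det) :
    (M * A * M⁻¹).charpoly = A.charpoly := by
  have hMM : M * M⁻¹ = 1 := Matrix.mul_nonsing_inv M hM
  have key : charmatrix (M * A * M⁻¹)
      = (Polynomial.C : ℂ →+* ℂ[X]).mapMatrix M * charmatrix A
        * (Polynomial.C : ℂ →+* ℂ[X]).mapMatrix M⁻¹ := by
    rw [charmatrix, charmatrix, mul_sub, sub_mul]
    congr 1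
    · have hcomm := (Matrix.scalar_commute (X : ℂ[X]) (fun r' => Commute.all _ _)
        ((Polynomial.C : ℂ →+* ℂ[X]).mapMatrix M)).symm
      rw [hcomm.eq]
      rw [Matrix.mul_assoc, ← _root_.map_mul, hMM, _root_.map_one, Matrix.mul_one]
    · rw [← _root_.map_mul, ← _root_.map_mul]
  have h1 : (((Polynomial.C : ℂ →+* ℂ[X]).mapMatrix M).det)
      * (((Polynomial.C : ℂ →+* ℂ[X]).mapMatrix M⁻¹).det) = 1 := by
    rw [← Matrix.det_mul, ← _root_.map_mul, hMM, _root_.map_one, Matrix.det_one]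
  rw [Matrix.charpoly, Matrix.charpoly, key, Matrix.det_mul, Matrix.det_mul, mul_right_comm,
    h1, one_mul]

/-- Conjugating by a matrix with `V * star V = 1` preserves the charpoly. -/
lemma charpoly_conj_unitary {V : Matrix (Fin d) (Fin d) ℂ} (hV : V * star V = 1)
    (D : Matrix (Fin d) (Fin d) ℂ) :
    (V * D * star V).charpoly = D.charpoly := by
  have hinv : V⁻¹ = star V := Matrix.inv_eq_right_inv hV
  have hdet : IsUnit V.det := by
    apply IsUnit.of_mul_eq_one (star V).det
    rw [← Matrix.det_mul, hV, Matrix.det_one]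
  rw [← hinv]
  exact charpoly_conj_aux _ _ hdet

lemma charpoly_diagonal' (c : Fin d → ℂ) :
    (Matrix.diagonal c).charpoly = ∏ i, (X - Polynomial.C (c i)) := by
  rw [Matrix.charpoly_of_upperTriangular _ (Matrix.blockTriangular_diagonal c)]
  simp

lemma eig_multiset (f g : Fin d → ℂ)
    (h : ∏ i, (X - Polynomial.C (f i)) = ∏ i, (X - Polynomial.C (g i))) :
    Multiset.map f Finset.univ.val = Multiset.map g Finset.univ.val := by
  have hf : ((Finset.univ.val.map f).map fun a => X - Polynomial.C a).prod.roots
      = Finset.univ.val.map f := Polynomial.roots_multiset_prod_X_sub_C _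
  have hg : ((Finset.univ.val.map g).map fun a => X - Polynomial.C a).prod.roots
      = Finset.univ.val.map g := Polynomial.roots_multiset_prod_X_sub_C _
  have hprod : ((Finset.univ.val.map f).map fun a => X - Polynomial.C a).prod
      = ((Finset.univ.val.map g).map fun a => X - Polynomial.C a).prod := by
    rw [Multiset.map_map, Multiset.map_map]
    simpa [Finset.prod_eq_multiset_prod, Function.comp] using h
  rw [← hf, ← hg, hprod]

lemma charpoly_isHermitian {A : Matrix (Fin d) (Fin d) ℂ} (hA : A.IsHermitian) :
    A.charpoly = ∏ i, (X - Polynomial.C ((hA.eigenvalues i : ℝ) : ℂ)) := by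
  conv_lhs => rw [hA.spectral_theorem, Unitary.conjStarAlgAut_apply]
  rw [show (star (hA.eigenvectorUnitary) : Matrix (Fin d) (Fin d) ℂ)
      = star (hA.eigenvectorUnitary : Matrix (Fin d) (Fin d) ℂ) from rfl,
    charpoly_conj_unitary (Unitary.coe_mul_star_self _), charpoly_diagonal']
  rfl

/-- Frobenius norm of the matrix log of a Hermitian matrix. -/
lemma frobNorm_mLog {A : Matrix (Fin d) (Fin d) ℂ} (hA : A.IsHermitian) :
    frobNorm (mLog A) = Real.sqrt (∑ i, Real.log (hA.eigenvalues i) ^ 2) := by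
  rw [mLog, dif_pos hA, frobNorm]
  set V : Matrix (Fin d) (Fin d) ℂ := (hA.eigenvectorUnitary : Matrix (Fin d) (Fin d) ℂ) with hV
  set c : Fin d → ℂ := fun i => (Real.log (hA.eigenvalues i) : ℂ) with hc
  have hstar : (star (hA.eigenvectorUnitary) : Matrix (Fin d) (Fin d) ℂ) = star V := rfl
  rw [hstar]
  have hsv : star V * V = 1 := Unitary.coe_star_mul_self _
  have hcstar : star c = c := by
    funext i
    simp [hc, Complex.star_def, Complex.conj_ofReal]
  have hH : (V * Matrix.diagonal c * star V)ᴴ = V * Matrix.diagonal c * star V := by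
    simp [Matrix.conjTranspose_mul, Matrix.diagonal_conjTranspose, hcstar,
      Matrix.star_eq_conjTranspose, Matrix.mul_assoc]
  rw [hH]
  have hsq : (V * Matrix.diagonal c * star V) * (V * Matrix.diagonal c * star V)
      = V * (Matrix.diagonal c * Matrix.diagonal c) * star V := by
    simp only [Matrix.mul_assoc]
    rw [← Matrix.mul_assoc (star V) V (Matrix.diagonal c * star V), hsv, Matrix.one_mul]
  rw [hsq]
  have htr : (V * (Matrix.diagonal c * Matrix.diagonal c) * star V).trace
      = (Matrix.diagonal c * Matrix.diagonal c).trace := by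
    rw [Matrix.trace_mul_comm, ← Matrix.mul_assoc, hsv, Matrix.one_mul]
  rw [htr, Matrix.diagonal_mul_diagonal, Matrix.trace_diagonal]
  congr 1
  rw [Complex.re_sum]
  refine Finset.sum_congr rfl fun i _ => ?_
  simp [hc, ← Complex.ofReal_mul, sq]

/-- The square root of a positive definite matrix is positive definite. -/
lemma posDef_sqrt {p : Matrix (Fin d) (Fin d) ℂ} (hp : p.PosDef) :
    (msqrt p).PosDef := by
  rw [msqrt, dif_pos hp.posSemidef]
  refine (Matrix.IsUnit.posDef_star_right_conjugate_iff
    (IsUnit.of_mul_eq_one _ (Unitary.coe_mul_star_self _))).mpr ?_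
  refine PosDef.diagonal fun i => ?_
  simp only [Function.comp_apply]
  exact Complex.zero_lt_real.mpr (Real.sqrt_pos.mpr (hp.eigenvalues_pos i))

lemma msqrt_mul_self {p : Matrix (Fin d) (Fin d) ℂ} (hp : p.PosDef) :
    msqrt p * msqrt p = p := by
  rw [msqrt, dif_pos hp.posSemidef]
  have key : ∀ hA : p.IsHermitian,
      (hA.eigenvectorUnitary : Matrix (Fin d) (Fin d) ℂ) *
        Matrix.diagonal ((↑) ∘ Real.sqrt ∘ hA.eigenvalues) *
        (star hA.eigenvectorUnitary : Matrix (Fin d) (Fin d) ℂ) *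
      ((hA.eigenvectorUnitary : Matrix (Fin d) (Fin d) ℂ) *
        Matrix.diagonal ((↑) ∘ Real.sqrt ∘ hA.eigenvalues) *
        (star hA.eigenvectorUnitary : Matrix (Fin d) (Fin d) ℂ)) = p := by
    intro hA
    conv_rhs => rw [hA.spectral_theorem, Unitary.conjStarAlgAut_apply]
    have hsv : (star hA.eigenvectorUnitary : Matrix (Fin d) (Fin d) ℂ) *
        (hA.eigenvectorUnitary : Matrix (Fin d) (Fin d) ℂ) = 1 :=
      Unitary.coe_star_mul_self _
    simp only [Matrix.mul_assoc]
    rw [← Matrix.mul_assoc _ (hA.eigenvectorUnitary : Matrix (Fin d) (Fin d) ℂ), hsv,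
      Matrix.one_mul, ← Matrix.mul_assoc (Matrix.diagonal _), Matrix.diagonal_mul_diagonal]
    congr 3
    funext i
    simp only [Function.comp_apply]
    rw [← Complex.ofReal_mul, Real.mul_self_sqrt (hp.eigenvalues_pos i).le]
    rfl
  exact key _

/-- Congruence by an invertible matrix preserves positive definiteness. -/
lemma posDef_conj_s6 {A : Matrix (Fin d) (Fin d) ℂ} (hA : A.PosDef)
    {B : Matrix (Fin d) (Fin d) ℂ} (hB : IsUnit B.det) :
    (Bᴴ * A * B).PosDef := by
  exact hA.conjTranspose_mul_mul_same
    (mulVec_injective_of_isUnit ((Matrix.isUnit_iff_isUnit_det B).mpr hB))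

end DeltaRAux

theorem deltaR_symm {d : ℕ} (p₁ p₂ : Matrix (Fin d) (Fin d) ℂ)
    (hp₁ : p₁.PosDef) (hp₂ : p₂.PosDef) :
    frobNorm (mLog ((msqrt p₁)⁻¹ * p₂ * (msqrt p₁)⁻¹)) =
      frobNorm (mLog ((msqrt p₂)⁻¹ * p₁ * (msqrt p₂)⁻¹)) := by
  have hps₁ := hp₁.posSemidef
  have hps₂ := hp₂.posSemidef
  set S₁ : Matrix (Fin d) (Fin d) ℂ := msqrt p₁ with hS₁def
  set S₂ : Matrix (Fin d) (Fin d) ℂ := msqrt p₂ with hS₂def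
  have hS₁ : S₁.PosDef := posDef_sqrt hp₁
  have hS₂ : S₂.PosDef := posDef_sqrt hp₂
  have hS₁sq : S₁ * S₁ = p₁ := msqrt_mul_self hp₁
  have hS₂sq : S₂ * S₂ = p₂ := msqrt_mul_self hp₂
  have hS₁inv : (S₁⁻¹).PosDef := hS₁.inv
  have hS₂inv : (S₂⁻¹).PosDef := hS₂.inv
  have hdS₁ : IsUnit S₁.det := (Matrix.isUnit_iff_isUnit_det _).mp hS₁.isUnit
  have hdS₂ : IsUnit S₂.det := (Matrix.isUnit_iff_isUnit_det _).mp hS₂.isUnit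
  have hdS₁inv : IsUnit (S₁⁻¹).det := (Matrix.isUnit_iff_isUnit_det _).mp hS₁inv.isUnit
  have hdS₂inv : IsUnit (S₂⁻¹).det := (Matrix.isUnit_iff_isUnit_det _).mp hS₂inv.isUnit
  have hdp₂ : IsUnit p₂.det := (Matrix.isUnit_iff_isUnit_det _).mp hp₂.isUnit
  clear_value S₁ S₂
  set A : Matrix (Fin d) (Fin d) ℂ := S₁⁻¹ * p₂ * S₁⁻¹ with hAdef
  set B : Matrix (Fin d) (Fin d) ℂ := S₂⁻¹ * p₁ * S₂⁻¹ with hBdef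
  have hA : A.PosDef := by
    have h := posDef_conj_s6 hp₂ hdS₁inv
    rwa [hS₁inv.1] at h
  have hB : B.PosDef := by
    have h := posDef_conj_s6 hp₁ hdS₂inv
    rwa [hS₂inv.1] at h
  -- A⁻¹ = S₁ * p₂⁻¹ * S₁
  have h11 : S₁⁻¹ * S₁ = 1 := Matrix.nonsing_inv_mul _ hdS₁
  have h22 : p₂ * p₂⁻¹ = 1 := Matrix.mul_nonsing_inv _ hdp₂
  have hAinv : A⁻¹ = S₁ * p₂⁻¹ * S₁ := by
    apply Matrix.inv_eq_right_inv
    calc S₁⁻¹ * p₂ * S₁⁻¹ * (S₁ * p₂⁻¹ * S₁)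
        = S₁⁻¹ * (p₂ * (S₁⁻¹ * (S₁ * (p₂⁻¹ * S₁)))) := by simp only [Matrix.mul_assoc]
      _ = S₁⁻¹ * (p₂ * (p₂⁻¹ * S₁)) := by
          rw [← Matrix.mul_assoc S₁⁻¹ S₁ (p₂⁻¹ * S₁), h11, Matrix.one_mul]
      _ = S₁⁻¹ * S₁ := by rw [← Matrix.mul_assoc p₂ p₂⁻¹ S₁, h22, Matrix.one_mul]
      _ = 1 := h11
  -- B = M * A⁻¹ * M⁻¹ with M = S₂⁻¹ * S₁
  set M : Matrix (Fin d) (Fin d) ℂ := S₂⁻¹ * S₁ with hMdef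
  have hMdet : IsUnit M.det := by
    rw [hMdef, Matrix.det_mul]
    exact hdS₂inv.mul hdS₁
  have hMH : Mᴴ = S₁ * S₂⁻¹ := by
    rw [hMdef, Matrix.conjTranspose_mul, hS₁.1.eq, hS₂inv.1.eq]
  have hp₂inv : S₂⁻¹ * S₂⁻¹ = p₂⁻¹ := by
    rw [← hS₂sq, Matrix.mul_inv_rev]
  have hMMH : M * Mᴴ = B := by
    rw [hMH, hMdef, hBdef]
    calc S₂⁻¹ * S₁ * (S₁ * S₂⁻¹) = S₂⁻¹ * (S₁ * (S₁ * S₂⁻¹)) := by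
          simp only [Matrix.mul_assoc]
      _ = S₂⁻¹ * (p₁ * S₂⁻¹) := by rw [← Matrix.mul_assoc S₁ S₁ S₂⁻¹, hS₁sq]
      _ = S₂⁻¹ * p₁ * S₂⁻¹ := by rw [Matrix.mul_assoc]
  have hMHM : Mᴴ * M = A⁻¹ := by
    rw [hMH, hMdef, hAinv]
    calc S₁ * S₂⁻¹ * (S₂⁻¹ * S₁) = S₁ * (S₂⁻¹ * S₂⁻¹) * S₁ := by
          simp only [Matrix.mul_assoc]
      _ = S₁ * p₂⁻¹ * S₁ := by rw [hp₂inv]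
  have hBsim : B = M * A⁻¹ * M⁻¹ := by
    rw [← hMHM, ← hMMH, ← Matrix.mul_assoc M Mᴴ M, Matrix.mul_assoc (M * Mᴴ) M M⁻¹,
      Matrix.mul_nonsing_inv M hMdet, Matrix.mul_one]
  -- eigenvalue bookkeeping
  have hchB := charpoly_isHermitian hB.1
  have hAspec := hA.1.spectral_theorem
  rw [Unitary.conjStarAlgAut_apply] at hAspec
  have hAeigpos := hA.eigenvalues_pos
  set VA : Matrix (Fin d) (Fin d) ℂ := (hA.1.eigenvectorUnitary : Matrix (Fin d) (Fin d) ℂ)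
    with hVAdef
  have hvsA : VA * star VA = 1 := Unitary.coe_mul_star_self _
  have hsvA : star VA * VA = 1 := Unitary.coe_star_mul_self _
  set μ : Fin d → ℝ := hA.1.eigenvalues with hμdef
  set ν : Fin d → ℝ := hB.1.eigenvalues with hνdef
  clear_value VA μ ν
  have hAinvspec : A⁻¹ = VA * Matrix.diagonal (fun i => (((μ i)⁻¹ : ℝ) : ℂ)) * star VA := by
    apply Matrix.inv_eq_right_inv
    rw [hAspec]
    calc VA * Matrix.diagonal (RCLike.ofReal ∘ μ) * star VA
          * (VA * Matrix.diagonal (fun i => (((μ i)⁻¹ : ℝ) : ℂ)) * star VA)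
        = VA * (Matrix.diagonal (RCLike.ofReal ∘ μ) *
            (star VA * (VA * (Matrix.diagonal (fun i => (((μ i)⁻¹ : ℝ) : ℂ))
              * star VA)))) := by simp only [Matrix.mul_assoc]
      _ = VA * (Matrix.diagonal (RCLike.ofReal ∘ μ) *
            (Matrix.diagonal (fun i => (((μ i)⁻¹ : ℝ) : ℂ)) * star VA)) := by
          rw [← Matrix.mul_assoc (star VA) VA, hsvA, Matrix.one_mul]
      _ = VA * ((Matrix.diagonal (RCLike.ofReal ∘ μ) *
            Matrix.diagonal (fun i => (((μ i)⁻¹ : ℝ) : ℂ))) * star VA) := by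
          rw [Matrix.mul_assoc]
      _ = VA * ((1 : Matrix (Fin d) (Fin d) ℂ) * star VA) := by
          rw [Matrix.diagonal_mul_diagonal]
          have hfun1 : (fun i => (RCLike.ofReal ∘ μ) i * (((μ i)⁻¹ : ℝ) : ℂ))
              = (fun _ : Fin d => (1 : ℂ)) := by
            funext i
            have hne : μ i ≠ 0 := (hAeigpos i).ne'
            show (((μ i : ℝ)) : ℂ) * (((μ i)⁻¹ : ℝ) : ℂ) = 1
            rw [← Complex.ofReal_mul, mul_inv_cancel₀ hne, Complex.ofReal_one]
          rw [hfun1, Matrix.diagonal_one]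
      _ = 1 := by rw [Matrix.one_mul, hvsA]
  have hchAinv : A⁻¹.charpoly
      = ∏ i, (Polynomial.X - Polynomial.C (((μ i)⁻¹ : ℝ) : ℂ)) := by
    rw [hAinvspec, charpoly_conj_unitary hvsA, charpoly_diagonal']
  have hsame : B.charpoly = A⁻¹.charpoly := by
    rw [hBsim]
    exact charpoly_conj_aux _ _ hMdet
  have hmult : Multiset.map (fun i => ((ν i : ℝ) : ℂ)) Finset.univ.val
      = Multiset.map (fun i => (((μ i)⁻¹ : ℝ) : ℂ)) Finset.univ.val :=
    eig_multiset _ _ (by rw [← hchB, hsame, hchAinv])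
  have hsum : ∑ i, Real.log (ν i) ^ 2 = ∑ i, Real.log (μ i) ^ 2 := by
    have hfun : (fun i : Fin d => Real.log ((μ i)⁻¹) ^ 2)
        = (fun i : Fin d => Real.log (μ i) ^ 2) := by
      funext i
      rw [Real.log_inv, neg_sq]
    calc ∑ i, Real.log (ν i) ^ 2
        = (Finset.univ.val.map fun i => Real.log (ν i) ^ 2).sum := by
          rw [Finset.sum_eq_multiset_sum]
      _ = (Finset.univ.val.map fun i => Real.log ((μ i)⁻¹) ^ 2).sum := by
          have h := congrArg (fun s => (s.map (fun z : ℂ => Real.log z.re ^ 2)).sum) hmult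
          simpa only [Multiset.map_map, Function.comp, Complex.ofReal_re] using h
      _ = ∑ i, Real.log (μ i) ^ 2 := by
          rw [Finset.sum_eq_multiset_sum, hfun]
  rw [frobNorm_mLog hA.1, frobNorm_mLog hB.1, ← hμdef, ← hνdef, hsum]
end

section
/- The affine-invariant inner product is invariant under congruence: for any invertible matrix a, Hermitian positive definite p, and Hermitian h₁, h₂, one has ⟨a* h₁ a, a* h₂ a⟩_{a* p a} = ⟨h₁, h₂⟩_p. -/
open Matrix
open scoped ComplexOrder Classical

/-- Affine-invariant metric (inner product) at `p`. -/
noncomputable def innerAI {d : ℕ} (p h₁ h₂ : Matrix (Fin d) (Fin d) ℂ) : ℂ :=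
  (((msqrt p)⁻¹ * h₁ * (msqrt p)⁻¹) * ((msqrt p)⁻¹ * h₂ * (msqrt p)⁻¹)).trace

lemma msqrt_mul_self_of_posDef {d : ℕ} {p : Matrix (Fin d) (Fin d) ℂ} (hp : p.PosDef) :
    msqrt p * msqrt p = p := by
  have hps := hp.posSemidef
  unfold msqrt
  rw [dif_pos hps]
  have key := hps.1.spectral_theorem
  rw [Unitary.conjStarAlgAut_apply] at key
  have hU : star (hps.1.eigenvectorUnitary : Matrix (Fin d) (Fin d) ℂ) *
      (hps.1.eigenvectorUnitary : Matrix (Fin d) (Fin d) ℂ) = 1 :=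
    Unitary.coe_star_mul_self hps.1.eigenvectorUnitary
  calc _ = (hps.1.eigenvectorUnitary : Matrix (Fin d) (Fin d) ℂ) *
        (Matrix.diagonal ((↑) ∘ Real.sqrt ∘ hps.1.eigenvalues) *
          (star (hps.1.eigenvectorUnitary : Matrix (Fin d) (Fin d) ℂ) *
            (hps.1.eigenvectorUnitary : Matrix (Fin d) (Fin d) ℂ)) *
          Matrix.diagonal ((↑) ∘ Real.sqrt ∘ hps.1.eigenvalues)) *
        star (hps.1.eigenvectorUnitary : Matrix (Fin d) (Fin d) ℂ) := by
        simp only [mul_assoc]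
    _ = p := by
      rw [hU, mul_one, diagonal_mul_diagonal]
      conv_rhs => rw [key]
      congr 3
      funext i
      simp only [Function.comp_apply]
      rw [← Complex.ofReal_mul, Real.mul_self_sqrt (hps.eigenvalues_nonneg i)]
      rfl

lemma innerAI_eq' {d : ℕ} (p h₁ h₂ : Matrix (Fin d) (Fin d) ℂ) (hp : p.PosDef) :
    innerAI p h₁ h₂ = (p⁻¹ * h₁ * p⁻¹ * h₂).trace := by
  unfold innerAI
  set s := msqrt p with hs
  have hs2 : s * s = p := msqrt_mul_self_of_posDef hp
  have hinv : p⁻¹ = s⁻¹ * s⁻¹ := by rw [← hs2, Matrix.mul_inv_rev]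
  rw [hinv]
  have : (s⁻¹ * h₁ * s⁻¹) * (s⁻¹ * h₂ * s⁻¹) = ((s⁻¹ * h₁ * s⁻¹) * (s⁻¹ * h₂)) * s⁻¹ := by
    noncomm_ring
  rw [this, Matrix.trace_mul_comm]
  congr 1
  noncomm_ring

theorem innerAI_congruence_invariant {d : ℕ} (p h₁ h₂ a : Matrix (Fin d) (Fin d) ℂ)
    (hp : p.PosDef) (hh₁ : h₁.IsHermitian) (hh₂ : h₂.IsHermitian) (ha : IsUnit a.det) :
    innerAI (aᴴ * p * a) (aᴴ * h₁ * a) (aᴴ * h₂ * a) = innerAI p h₁ h₂ := by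
  have hq := posDef_conj hp ha
  rw [innerAI_eq' _ _ _ hq, innerAI_eq' _ _ _ hp]
  have hinv : (aᴴ * p * a)⁻¹ = a⁻¹ * p⁻¹ * (aᴴ)⁻¹ := by
    rw [Matrix.mul_inv_rev, Matrix.mul_inv_rev, mul_assoc]
  rw [hinv]
  have h1 : a⁻¹ * p⁻¹ * aᴴ⁻¹ * (aᴴ * h₁ * a) * (a⁻¹ * p⁻¹ * aᴴ⁻¹) * (aᴴ * h₂ * a)
      = a⁻¹ * (p⁻¹ * h₁ * p⁻¹ * h₂ * a) := by
    have e1 : aᴴ⁻¹ * aᴴ = 1 := Matrix.nonsing_inv_mul _ (by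
      rw [Matrix.det_conjTranspose]; exact ha.star)
    have e2 : a * a⁻¹ = 1 := Matrix.mul_nonsing_inv _ ha
    calc a⁻¹ * p⁻¹ * aᴴ⁻¹ * (aᴴ * h₁ * a) * (a⁻¹ * p⁻¹ * aᴴ⁻¹) * (aᴴ * h₂ * a)
        = a⁻¹ * (p⁻¹ * ((aᴴ⁻¹ * aᴴ) * (h₁ * ((a * a⁻¹) * (p⁻¹ * ((aᴴ⁻¹ * aᴴ) * (h₂ * a))))))) := by
          noncomm_ring
      _ = a⁻¹ * (p⁻¹ * h₁ * p⁻¹ * h₂ * a) := by rw [e1, e2]; noncomm_ring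
  rw [h1, Matrix.trace_mul_comm]
  have e2 : a * a⁻¹ = 1 := Matrix.mul_nonsing_inv _ ha
  calc (p⁻¹ * h₁ * p⁻¹ * h₂ * a * a⁻¹).trace
      = (p⁻¹ * h₁ * p⁻¹ * h₂ * (a * a⁻¹)).trace := by rw [mul_assoc]
    _ = (p⁻¹ * h₁ * p⁻¹ * h₂).trace := by rw [e2, mul_one]
end
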